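/- Let (Ω, ℱ, P) be a probability space, let m = s²·n for positive integers s and n, and let x, y : Ω → ℝᵐ be square-integrable random vectors with E[x | σ(y)] = y almost surely and Var(xⱼ | σ(y)) ≤ 1 almost surely for every coordinate j ∈ {1,…,m}. Let f : ℝᵐ → ℝᵐ be a measurable function with f∘x square-integrable. Let 𝒥 be a nonempty finite family of subsets of {1,…,m}, each of cardinality n = m/s², such that every index j ∈ {1,…,m} belongs to exactly |𝒥|/s² members of 𝒥. For each J ∈ 𝒥, let g^J : Ω → ℝᴶ be a square-integrable random vector such that Cov(g^J_j, x_j | σ(y)) = 0 almost surely for every j ∈ J. Then E‖f(x) − y‖² + E‖x − y‖² ≤ E‖f(x) − x‖² + 2·√(m·s²) · (1/|𝒥|) · Σ_{J∈𝒥} ( E[ Σ_{j∈J} (f(x)_j − g^J_j)² ] )^{1/2}. -/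

import Mathlib

open MeasureTheory Finset

/-- Conditional expectation `E[f | 𝒢]` under measure `μ` (ambient σ-algebra `mΩ`). -/
noncomputable def condExpect {Ω : Type*} {mΩ : MeasurableSpace Ω} (𝒢 : MeasurableSpace Ω)
    (μ : @Measure Ω mΩ) {E : Type*} [NormedAddCommGroup E] [NormedSpace ℝ E] [CompleteSpace E]
    (f : Ω → E) : Ω → E :=
  @MeasureTheory.condExp Ω E 𝒢 mΩ _ _ μ f

/-- Conditional covariance of two real random variables given a sub-σ-algebra `𝒢`:
`Cov(U, V | 𝒢) = E[U·V | 𝒢] − E[U | 𝒢]·E[V | 𝒢]`. -/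
noncomputable def condCov {Ω : Type*} {mΩ : MeasurableSpace Ω} (𝒢 : MeasurableSpace Ω)
    (μ : @Measure Ω mΩ) (U V : Ω → ℝ) : Ω → ℝ :=
  fun ω => condExpect 𝒢 μ (fun ω' => U ω' * V ω') ω
    - condExpect 𝒢 μ U ω * condExpect 𝒢 μ V ω

/-- Conditional variance: `Var(U | 𝒢) = Cov(U, U | 𝒢)`. -/
noncomputable def condVar {Ω : Type*} {mΩ : MeasurableSpace Ω} (𝒢 : MeasurableSpace Ω)
    (μ : @Measure Ω mΩ) (U : Ω → ℝ) : Ω → ℝ :=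
  condCov 𝒢 μ U U

section Aux

set_option linter.unusedSectionVars false

variable {Ω : Type*} {𝒢 : MeasurableSpace Ω} [mΩ : MeasurableSpace Ω] {P : Measure Ω}
  [IsProbabilityMeasure P]

/-- Product of two `L²` functions is integrable. -/
lemma Aux.mul_int {u v : Ω → ℝ} (hu : MemLp u 2 P) (hv : MemLp v 2 P) :
    Integrable (fun ω => u ω * v ω) P := by
  refine Integrable.mono' ((hu.integrable_sq.add hv.integrable_sq).div_const 2)
    (hu.1.mul hv.1) (Filter.Eventually.of_forall fun ω => ?_)
  rw [Real.norm_eq_abs, abs_mul]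
  simp only [Pi.add_apply]
  nlinarith [sq_nonneg (|u ω| - |v ω|), abs_nonneg (u ω), abs_nonneg (v ω),
    sq_abs (u ω), sq_abs (v ω)]

/-- Cauchy–Schwarz for integrals. -/
lemma Aux.integral_mul_le_sqrt {u v : Ω → ℝ} (hu : MemLp u 2 P) (hv : MemLp v 2 P) :
    ∫ ω, u ω * v ω ∂P ≤ Real.sqrt (∫ ω, u ω ^ 2 ∂P) * Real.sqrt (∫ ω, v ω ^ 2 ∂P) := by
  set U := hu.toLp u
  set V := hv.toLp v
  have hUV : ∫ ω, u ω * v ω ∂P = @inner ℝ _ _ U V := by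
    rw [L2.inner_def]
    refine integral_congr_ae ?_
    filter_upwards [hu.coeFn_toLp, hv.coeFn_toLp] with ω h1 h2
    simp [U, V, h1, h2, RCLike.inner_apply, mul_comm]
  have hU : Real.sqrt (∫ ω, u ω ^ 2 ∂P) = ‖U‖ := by
    rw [← Real.sqrt_sq (norm_nonneg U), ← real_inner_self_eq_norm_sq, L2.inner_def]
    congr 1
    refine integral_congr_ae ?_
    filter_upwards [hu.coeFn_toLp] with ω h1
    simp [U, h1, RCLike.inner_apply, sq]
  have hV : Real.sqrt (∫ ω, v ω ^ 2 ∂P) = ‖V‖ := by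
    rw [← Real.sqrt_sq (norm_nonneg V), ← real_inner_self_eq_norm_sq, L2.inner_def]
    congr 1
    refine integral_congr_ae ?_
    filter_upwards [hv.coeFn_toLp] with ω h1
    simp [V, h1, RCLike.inner_apply, sq]
  rw [hUV, hU, hV]
  exact real_inner_le_norm U V

/-- Coordinatewise conditional expectation. -/
lemma Aux.condexp_coord {m : ℕ} {x y : Ω → EuclideanSpace ℝ (Fin m)} (h𝒢 : 𝒢 ≤ mΩ)
    (hyG : Measurable[𝒢] y)
    (hx : MemLp x 2 P) (hy : MemLp y 2 P)
    (hcond : P[x|𝒢] =ᵐ[P] y) (j : Fin m) :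
    P[(fun ω => x ω j)|𝒢] =ᵐ[P] fun ω => y ω j := by
  have hxj : MemLp (fun ω => x ω j) 2 P := (EuclideanSpace.proj j (𝕜 := ℝ)).comp_memLp' hx
  have hyj : MemLp (fun ω => y ω j) 2 P := (EuclideanSpace.proj j (𝕜 := ℝ)).comp_memLp' hy
  have hyjG : StronglyMeasurable[𝒢] (fun ω => y ω j) :=
    ((EuclideanSpace.proj j (𝕜 := ℝ)).continuous.measurable.comp hyG).stronglyMeasurable
  refine (ae_eq_condExp_of_forall_setIntegral_eq h𝒢 (hxj.integrable one_le_two)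
    (fun s _ _ => (hyj.integrable one_le_two).integrableOn) (fun s hs _ => ?_)
    hyjG.aestronglyMeasurable).symm
  have h1 : ∫ ω in s, x ω ∂P = ∫ ω in s, y ω ∂P := by
    rw [← setIntegral_condExp h𝒢 (hx.integrable one_le_two) hs]
    exact setIntegral_congr_ae (h𝒢 _ hs) (hcond.mono fun ω h _ => h)
  have h2 := congrArg (EuclideanSpace.proj j (𝕜 := ℝ)) h1.symm
  rwa [← ContinuousLinearMap.integral_comp_comm _ ((hx.integrable one_le_two).integrableOn),
    ← ContinuousLinearMap.integral_comp_comm _ ((hy.integrable one_le_two).integrableOn)] at h2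

/-- Pull-out orthogonality: if `z` is `𝒢`-measurable then `∫ z·u = ∫ z·v`
whenever `E[u|𝒢] = v` a.s.. -/
lemma Aux.integral_mul_eq_of_condexp (h𝒢 : 𝒢 ≤ mΩ) {z u v : Ω → ℝ}
    (hzG : StronglyMeasurable[𝒢] z) (hz : MemLp z 2 P) (hu : MemLp u 2 P)
    (hcond : P[u|𝒢] =ᵐ[P] v) :
    ∫ ω, z ω * u ω ∂P = ∫ ω, z ω * v ω ∂P := by
  have hzu : Integrable (fun ω => z ω * u ω) P := Aux.mul_int hz hu
  rw [← integral_condExp h𝒢 (f := fun ω => z ω * u ω)]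
  refine integral_congr_ae ?_
  have h1 := condExp_mul_of_stronglyMeasurable_left hzG hzu (hu.integrable one_le_two)
  filter_upwards [h1, hcond] with ω h1 h2
  simp only [Pi.mul_apply] at h1 ⊢
  rw [show (fun ω => z ω * u ω) = z * u from rfl, h1, h2]

/-- Variance bound : `∫ (u − v)² ≤ 1` when `E[u|𝒢] = v` and `Var(u|𝒢) ≤ 1`. -/
lemma Aux.integral_sub_sq_le_one (h𝒢 : 𝒢 ≤ mΩ) {u v : Ω → ℝ}
    (hu : MemLp u 2 P) (hv : MemLp v 2 P) (hvG : StronglyMeasurable[𝒢] v)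
    (hcond : P[u|𝒢] =ᵐ[P] v)
    (hvar : ∀ᵐ ω ∂P, (P[(fun ω' => u ω' * u ω')|𝒢]) ω - (P[u|𝒢]) ω * (P[u|𝒢]) ω ≤ 1) :
    ∫ ω, (u ω - v ω) ^ 2 ∂P ≤ 1 := by
  have huu : Integrable (fun ω => u ω * u ω) P := Aux.mul_int hu hu
  have hvv : Integrable (fun ω => v ω * v ω) P := Aux.mul_int hv hv
  have hvu : Integrable (fun ω => v ω * u ω) P := Aux.mul_int hv hu
  have hW2 : Integrable (fun ω => (P[u|𝒢]) ω * (P[u|𝒢]) ω) P :=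
    hvv.congr (by filter_upwards [hcond] with ω h; simp [h])
  have hkey : ∫ ω, v ω * u ω ∂P = ∫ ω, v ω * v ω ∂P :=
    Aux.integral_mul_eq_of_condexp h𝒢 hvG hv hu hcond
  have hWle : ∫ ω, ((P[(fun ω' => u ω' * u ω')|𝒢]) ω - (P[u|𝒢]) ω * (P[u|𝒢]) ω) ∂P
      ≤ 1 := by
    calc ∫ ω, ((P[(fun ω' => u ω' * u ω')|𝒢]) ω - (P[u|𝒢]) ω * (P[u|𝒢]) ω) ∂P
        ≤ ∫ _, (1 : ℝ) ∂P :=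
          integral_mono_ae (integrable_condExp.sub hW2) (integrable_const 1) hvar
      _ = 1 := by simp
  have hsplit : ∫ ω, ((P[(fun ω' => u ω' * u ω')|𝒢]) ω - (P[u|𝒢]) ω * (P[u|𝒢]) ω) ∂P
      = ∫ ω, u ω * u ω ∂P - ∫ ω, v ω * v ω ∂P := by
    rw [integral_sub integrable_condExp hW2, integral_condExp h𝒢]
    congr 1
    exact integral_congr_ae (by filter_upwards [hcond] with ω h; simp [h])
  have hexp : ∫ ω, (u ω - v ω) ^ 2 ∂P
      = ∫ ω, u ω * u ω ∂P - 2 * ∫ ω, v ω * u ω ∂P + ∫ ω, v ω * v ω ∂P := by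
    have heq : (fun ω => (u ω - v ω) ^ 2)
        = fun ω => (u ω * u ω - 2 * (v ω * u ω)) + v ω * v ω := funext fun ω => by ring
    have hint1 : Integrable (fun ω => u ω * u ω - 2 * (v ω * u ω)) P :=
      huu.sub (hvu.const_mul 2)
    rw [heq, integral_add hint1 hvv, integral_sub huu (hvu.const_mul 2), integral_const_mul]
  rw [hexp, hkey]
  rw [hsplit] at hWle
  linarith

/-- Orthogonality for `G` with vanishing conditional covariance. -/
lemma Aux.integral_g_mul_eq (h𝒢 : 𝒢 ≤ mΩ) {G u v : Ω → ℝ}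
    (hG : MemLp G 2 P) (hu : MemLp u 2 P) (hv : MemLp v 2 P)
    (hvG : StronglyMeasurable[𝒢] v)
    (hcond : P[u|𝒢] =ᵐ[P] v)
    (hcov : ∀ᵐ ω ∂P, (P[(fun ω' => G ω' * u ω')|𝒢]) ω = (P[G|𝒢]) ω * (P[u|𝒢]) ω) :
    ∫ ω, G ω * u ω ∂P = ∫ ω, G ω * v ω ∂P := by
  have h1 : ∫ ω, G ω * u ω ∂P = ∫ ω, (P[G|𝒢]) ω * v ω ∂P := by
    rw [← integral_condExp h𝒢 (f := fun ω => G ω * u ω)]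
    refine integral_congr_ae ?_
    filter_upwards [hcov, hcond] with ω h1 h2
    rw [h1, h2]
  have h2 : ∫ ω, G ω * v ω ∂P = ∫ ω, (P[G|𝒢]) ω * v ω ∂P := by
    have h3 : ∫ ω, v ω * G ω ∂P = ∫ ω, v ω * (P[G|𝒢]) ω ∂P := by
      rw [← integral_condExp h𝒢 (f := fun ω => v ω * G ω)]
      refine integral_congr_ae ?_
      have h4 := condExp_mul_of_stronglyMeasurable_left hvG (Aux.mul_int hv hG)
        (hG.integrable one_le_two)
      filter_upwards [h4] with ω h4
      exact h4
    rw [show (fun ω => G ω * v ω) = fun ω => v ω * G ω from funext fun ω => mul_comm _ _, h3]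
    exact integral_congr_ae (Filter.Eventually.of_forall fun ω => mul_comm _ _)
  rw [h1, h2]

/-- Integral of the squared norm splits as a sum of coordinatewise integrals. -/
lemma Aux.integral_norm_sq_eq_sum {m : ℕ} {w : Ω → EuclideanSpace ℝ (Fin m)}
    (hw : MemLp w 2 P) :
    ∫ ω, ‖w ω‖ ^ 2 ∂P = ∑ j : Fin m, ∫ ω, (w ω j) ^ 2 ∂P := by
  have h1 : ∀ ω, ‖w ω‖ ^ 2 = ∑ j : Fin m, (w ω j) ^ 2 := fun ω => by
    rw [EuclideanSpace.norm_eq, Real.sq_sqrt (Finset.sum_nonneg fun _ _ => sq_nonneg _)]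
    simp [Real.norm_eq_abs, sq_abs]
  calc ∫ ω, ‖w ω‖ ^ 2 ∂P = ∫ ω, ∑ j : Fin m, (w ω j) ^ 2 ∂P := by simp_rw [h1]
    _ = ∑ j : Fin m, ∫ ω, (w ω j) ^ 2 ∂P :=
        integral_finset_sum _ fun j _ =>
          ((EuclideanSpace.proj j (𝕜 := ℝ)).comp_memLp' hw).integrable_sq

end Aux

/-- **Proposition 1 (downsampled invariance bound).** If `E[x | σ(y)] = y` a.s.,
`Var(xⱼ | σ(y)) ≤ 1` a.s. for every coordinate `j`, each `J ∈ 𝒥` has cardinality `n = m/s²`,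
every index belongs to exactly `|𝒥|/s²` members of `𝒥`, and each `gᴶ` satisfies
`Cov(gᴶⱼ, xⱼ | σ(y)) = 0` a.s. for every `j ∈ J`, then
`E‖f(x) − y‖² + E‖x − y‖² ≤ E‖f(x) − x‖²
  + 2·√(m·s²)·(1/|𝒥|)·Σ_{J∈𝒥} (E[Σ_{j∈J} (f(x)ⱼ − gᴶⱼ)²])^{1/2}`. -/
theorem supervised_loss_le_self_supervised_add_downsampled_invariance
    {Ω : Type*} [mΩ : MeasurableSpace Ω] (P : Measure Ω) [IsProbabilityMeasure P]
    (m s n : ℕ) (hs : 0 < s) (hn : 0 < n) (hm : m = s ^ 2 * n)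
    (x y : Ω → EuclideanSpace ℝ (Fin m))
    (hxm : Measurable x) (hym : Measurable y)
    (hx : MemLp x 2 P) (hy : MemLp y 2 P)
    (hcond : condExpect (MeasurableSpace.comap y inferInstance) P x =ᵐ[P] y)
    (hvar : ∀ j : Fin m, ∀ᵐ ω ∂P,
      condVar (MeasurableSpace.comap y inferInstance) P (fun ω' => x ω' j) ω ≤ 1)
    (f : EuclideanSpace ℝ (Fin m) → EuclideanSpace ℝ (Fin m)) (hf : Measurable f)
    (hfx : MemLp (fun ω => f (x ω)) 2 P)
    (𝒥 : Finset (Finset (Fin m))) (h𝒥 : 𝒥.Nonempty)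
    (hJcard : ∀ J ∈ 𝒥, J.card = n)
    (hJcount : ∀ j : Fin m, s ^ 2 * (𝒥.filter (fun J => j ∈ J)).card = 𝒥.card)
    (g : Finset (Fin m) → Fin m → Ω → ℝ)
    (hg : ∀ J ∈ 𝒥, ∀ j ∈ J, MemLp (g J j) 2 P)
    (hgcov : ∀ J ∈ 𝒥, ∀ j ∈ J, ∀ᵐ ω ∂P,
      condCov (MeasurableSpace.comap y inferInstance) P (g J j) (fun ω' => x ω' j) ω = 0) :
    (∫ ω, ‖f (x ω) - y ω‖ ^ 2 ∂P) + ∫ ω, ‖x ω - y ω‖ ^ 2 ∂P ≤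
      (∫ ω, ‖f (x ω) - x ω‖ ^ 2 ∂P) +
        2 * Real.sqrt ((m : ℝ) * s ^ 2) * ((1 / (𝒥.card : ℝ)) *
          ∑ J ∈ 𝒥, Real.sqrt (∫ ω, ∑ j ∈ J, (f (x ω) j - g J j ω) ^ 2 ∂P)) := by
  classical
  have h𝒢 : MeasurableSpace.comap y inferInstance ≤ mΩ := hym.comap_le
  have hyG : Measurable[MeasurableSpace.comap y inferInstance] y :=
    measurable_iff_comap_le.mpr le_rfl
  have hcond' : P[x|MeasurableSpace.comap y inferInstance] =ᵐ[P] y := hcond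
  -- coordinate L² facts
  have hxj : ∀ j : Fin m, MemLp (fun ω => x ω j) 2 P :=
    fun j => (EuclideanSpace.proj j (𝕜 := ℝ)).comp_memLp' hx
  have hyj : ∀ j : Fin m, MemLp (fun ω => y ω j) 2 P :=
    fun j => (EuclideanSpace.proj j (𝕜 := ℝ)).comp_memLp' hy
  have hFj : ∀ j : Fin m, MemLp (fun ω => f (x ω) j) 2 P :=
    fun j => (EuclideanSpace.proj j (𝕜 := ℝ)).comp_memLp' hfx
  have hyjG : ∀ j : Fin m,
      StronglyMeasurable[MeasurableSpace.comap y inferInstance] (fun ω => y ω j) :=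
    fun j => ((EuclideanSpace.proj j (𝕜 := ℝ)).continuous.measurable.comp hyG).stronglyMeasurable
  have hcoord : ∀ j : Fin m,
      P[(fun ω => x ω j)|MeasurableSpace.comap y inferInstance] =ᵐ[P] fun ω => y ω j :=
    fun j => Aux.condexp_coord h𝒢 hyG hx hy hcond' j
  -- variance bound per coordinate
  have hvar' : ∀ j : Fin m, ∫ ω, (x ω j - y ω j) ^ 2 ∂P ≤ 1 :=
    fun j => Aux.integral_sub_sq_le_one h𝒢 (hxj j) (hyj j) (hyjG j) (hcoord j) (hvar j)
  -- the key inner-product quantity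
  set a : Fin m → ℝ := fun j => ∫ ω, (f (x ω) j - y ω j) * (x ω j - y ω j) ∂P with ha
  -- Step 1 : exact expansion
  have key1 : (∫ ω, ‖f (x ω) - y ω‖ ^ 2 ∂P) + ∫ ω, ‖x ω - y ω‖ ^ 2 ∂P
      = (∫ ω, ‖f (x ω) - x ω‖ ^ 2 ∂P) + 2 * ∑ j : Fin m, a j := by
    have e1 : ∫ ω, ‖f (x ω) - y ω‖ ^ 2 ∂P
        = ∑ j : Fin m, ∫ ω, (f (x ω) j - y ω j) ^ 2 ∂P := by
      have h := Aux.integral_norm_sq_eq_sum (hfx.sub hy)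
      simpa [PiLp.sub_apply] using h
    have e2 : ∫ ω, ‖x ω - y ω‖ ^ 2 ∂P
        = ∑ j : Fin m, ∫ ω, (x ω j - y ω j) ^ 2 ∂P := by
      have h := Aux.integral_norm_sq_eq_sum (hx.sub hy)
      simpa [PiLp.sub_apply] using h
    have e3 : ∫ ω, ‖f (x ω) - x ω‖ ^ 2 ∂P
        = ∑ j : Fin m, ∫ ω, (f (x ω) j - x ω j) ^ 2 ∂P := by
      have h := Aux.integral_norm_sq_eq_sum (hfx.sub hx)
      simpa [PiLp.sub_apply] using h
    have e4 : ∀ j : Fin m, ∫ ω, (f (x ω) j - y ω j) ^ 2 ∂P + ∫ ω, (x ω j - y ω j) ^ 2 ∂P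
        = ∫ ω, (f (x ω) j - x ω j) ^ 2 ∂P + 2 * a j := by
      intro j
      have i1 : Integrable (fun ω => (f (x ω) j - y ω j) ^ 2) P :=
        ((hFj j).sub (hyj j)).integrable_sq
      have i2 : Integrable (fun ω => (x ω j - y ω j) ^ 2) P :=
        ((hxj j).sub (hyj j)).integrable_sq
      have i3 : Integrable (fun ω => (f (x ω) j - x ω j) ^ 2) P :=
        ((hFj j).sub (hxj j)).integrable_sq
      have i4 : Integrable (fun ω => (f (x ω) j - y ω j) * (x ω j - y ω j)) P :=
        Aux.mul_int ((hFj j).sub (hyj j)) ((hxj j).sub (hyj j))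
      have heq : ∫ ω, ((f (x ω) j - y ω j) ^ 2 + (x ω j - y ω j) ^ 2) ∂P
          = ∫ ω, ((f (x ω) j - x ω j) ^ 2
            + 2 * ((f (x ω) j - y ω j) * (x ω j - y ω j))) ∂P :=
        integral_congr_ae (Filter.Eventually.of_forall fun ω => by ring)
      rw [integral_add i1 i2, integral_add i3 (i4.const_mul 2), integral_const_mul] at heq
      simpa [ha] using heq
    rw [e1, e2, e3, ← Finset.sum_add_distrib]
    rw [show (∑ j : Fin m,
        (∫ ω, (f (x ω) j - y ω j) ^ 2 ∂P + ∫ ω, (x ω j - y ω j) ^ 2 ∂P))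
      = ∑ j : Fin m, (∫ ω, (f (x ω) j - x ω j) ^ 2 ∂P + 2 * a j) from
        Finset.sum_congr rfl fun j _ => e4 j]
    rw [Finset.sum_add_distrib, Finset.mul_sum]
  -- Step 2 : per-coordinate bound
  have key2 : ∀ J ∈ 𝒥, ∀ j ∈ J,
      a j ≤ Real.sqrt (∫ ω, (f (x ω) j - g J j ω) ^ 2 ∂P) := by
    intro J hJ j hj
    have hGj : MemLp (g J j) 2 P := hg J hJ j hj
    have hcov' : ∀ᵐ ω ∂P,
        (P[(fun ω' => g J j ω' * x ω' j)|MeasurableSpace.comap y inferInstance]) ω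
          = (P[g J j|MeasurableSpace.comap y inferInstance]) ω
            * (P[(fun ω' => x ω' j)|MeasurableSpace.comap y inferInstance]) ω := by
      filter_upwards [hgcov J hJ j hj] with ω h
      exact sub_eq_zero.mp h
    have o1 : ∫ ω, y ω j * x ω j ∂P = ∫ ω, y ω j * y ω j ∂P :=
      Aux.integral_mul_eq_of_condexp h𝒢 (hyjG j) (hyj j) (hxj j) (hcoord j)
    have o2 : ∫ ω, g J j ω * x ω j ∂P = ∫ ω, g J j ω * y ω j ∂P :=
      Aux.integral_g_mul_eq h𝒢 hGj (hxj j) (hyj j) (hyjG j) (hcoord j) hcov'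
    have hzero : ∫ ω, (g J j ω - y ω j) * (x ω j - y ω j) ∂P = 0 := by
      have heq : (fun ω => (g J j ω - y ω j) * (x ω j - y ω j))
          = fun ω => (g J j ω * x ω j - g J j ω * y ω j)
            - (y ω j * x ω j - y ω j * y ω j) := funext fun ω => by ring
      have i1 : Integrable (fun ω => g J j ω * x ω j - g J j ω * y ω j) P :=
        (Aux.mul_int hGj (hxj j)).sub (Aux.mul_int hGj (hyj j))
      have i2 : Integrable (fun ω => y ω j * x ω j - y ω j * y ω j) P :=
        (Aux.mul_int (hyj j) (hxj j)).sub (Aux.mul_int (hyj j) (hyj j))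
      rw [heq, integral_sub i1 i2,
        integral_sub (Aux.mul_int hGj (hxj j)) (Aux.mul_int hGj (hyj j)),
        integral_sub (Aux.mul_int (hyj j) (hxj j)) (Aux.mul_int (hyj j) (hyj j)),
        o1, o2]
      ring
    have ha2 : a j = ∫ ω, (f (x ω) j - g J j ω) * (x ω j - y ω j) ∂P := by
      have heq : (fun ω => (f (x ω) j - y ω j) * (x ω j - y ω j))
          = fun ω => (f (x ω) j - g J j ω) * (x ω j - y ω j)
            + (g J j ω - y ω j) * (x ω j - y ω j) := funext fun ω => by ring
      have i1 : Integrable (fun ω => (f (x ω) j - g J j ω) * (x ω j - y ω j)) P :=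
        Aux.mul_int ((hFj j).sub hGj) ((hxj j).sub (hyj j))
      have i2 : Integrable (fun ω => (g J j ω - y ω j) * (x ω j - y ω j)) P :=
        Aux.mul_int (hGj.sub (hyj j)) ((hxj j).sub (hyj j))
      rw [ha]
      simp only []
      rw [heq, integral_add i1 i2, hzero, add_zero]
    rw [ha2]
    calc ∫ ω, (f (x ω) j - g J j ω) * (x ω j - y ω j) ∂P
        ≤ Real.sqrt (∫ ω, (f (x ω) j - g J j ω) ^ 2 ∂P)
          * Real.sqrt (∫ ω, (x ω j - y ω j) ^ 2 ∂P) :=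
          Aux.integral_mul_le_sqrt ((hFj j).sub hGj) ((hxj j).sub (hyj j))
      _ ≤ Real.sqrt (∫ ω, (f (x ω) j - g J j ω) ^ 2 ∂P) * 1 := by
          refine mul_le_mul_of_nonneg_left ?_ (Real.sqrt_nonneg _)
          rw [show (1 : ℝ) = Real.sqrt 1 from Real.sqrt_one.symm]
          exact Real.sqrt_le_sqrt (hvar' j)
      _ = Real.sqrt (∫ ω, (f (x ω) j - g J j ω) ^ 2 ∂P) := mul_one _
  -- Step 3 : counting identity
  have key3 : (𝒥.card : ℝ) * ∑ j : Fin m, a j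
      = (s : ℝ) ^ 2 * ∑ J ∈ 𝒥, ∑ j ∈ J, a j := by
    have swap : ∑ J ∈ 𝒥, ∑ j ∈ J, a j
        = ∑ j : Fin m, ((𝒥.filter (fun J => j ∈ J)).card : ℝ) * a j := by
      calc ∑ J ∈ 𝒥, ∑ j ∈ J, a j
          = ∑ J ∈ 𝒥, ∑ j : Fin m, if j ∈ J then a j else 0 := by
            refine Finset.sum_congr rfl fun J _ => ?_
            rw [Finset.sum_ite_mem, Finset.univ_inter]
        _ = ∑ j : Fin m, ∑ J ∈ 𝒥, if j ∈ J then a j else 0 := Finset.sum_comm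
        _ = ∑ j : Fin m, ((𝒥.filter (fun J => j ∈ J)).card : ℝ) * a j := by
            refine Finset.sum_congr rfl fun j _ => ?_
            rw [← Finset.sum_filter, Finset.sum_const, nsmul_eq_mul]
    rw [swap, Finset.mul_sum, Finset.mul_sum]
    refine Finset.sum_congr rfl fun j _ => ?_
    rw [← mul_assoc]
    congr 1
    have := hJcount j
    have h2 : ((s ^ 2 * (𝒥.filter (fun J => j ∈ J)).card : ℕ) : ℝ) = ((𝒥.card : ℕ) : ℝ) := by
      exact_mod_cast congrArg (fun k : ℕ => (k : ℝ)) this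
    push_cast at h2 ⊢
    linarith
  -- Step 4 : per-J Cauchy–Schwarz for sums
  have key4 : ∀ J ∈ 𝒥, ∑ j ∈ J, Real.sqrt (∫ ω, (f (x ω) j - g J j ω) ^ 2 ∂P)
      ≤ Real.sqrt (n : ℝ) * Real.sqrt (∫ ω, ∑ j ∈ J, (f (x ω) j - g J j ω) ^ 2 ∂P) := by
    intro J hJ
    have hsum : ∫ ω, ∑ j ∈ J, (f (x ω) j - g J j ω) ^ 2 ∂P
        = ∑ j ∈ J, ∫ ω, (f (x ω) j - g J j ω) ^ 2 ∂P :=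
      integral_finset_sum _ fun j hj => ((hFj j).sub (hg J hJ j hj)).integrable_sq
    have hCS := Real.sum_mul_le_sqrt_mul_sqrt J (fun _ => (1 : ℝ))
      (fun j => Real.sqrt (∫ ω, (f (x ω) j - g J j ω) ^ 2 ∂P))
    simp only [one_mul, one_pow] at hCS
    have hsq : ∀ j ∈ J, Real.sqrt (∫ ω, (f (x ω) j - g J j ω) ^ 2 ∂P) ^ 2
        = ∫ ω, (f (x ω) j - g J j ω) ^ 2 ∂P := fun j _ =>
      Real.sq_sqrt (integral_nonneg fun ω => sq_nonneg _)
    rw [Finset.sum_congr rfl hsq, Finset.sum_const, nsmul_eq_mul, mul_one, hJcard J hJ] at hCS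
    rw [hsum]
    exact hCS
  -- Final assembly
  have hc0 : (0 : ℝ) < (𝒥.card : ℝ) := by
    exact_mod_cast Finset.card_pos.mpr h𝒥
  have hsqrt : Real.sqrt ((m : ℝ) * (s : ℝ) ^ 2) = (s : ℝ) ^ 2 * Real.sqrt (n : ℝ) := by
    have : (m : ℝ) * (s : ℝ) ^ 2 = ((s : ℝ) ^ 2) ^ 2 * (n : ℝ) := by
      rw [hm]; push_cast; ring
    rw [this, Real.sqrt_mul (sq_nonneg _), Real.sqrt_sq (sq_nonneg _)]
  have main : ∑ j : Fin m, a j ≤ Real.sqrt ((m : ℝ) * (s : ℝ) ^ 2) * ((1 / (𝒥.card : ℝ)) *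
      ∑ J ∈ 𝒥, Real.sqrt (∫ ω, ∑ j ∈ J, (f (x ω) j - g J j ω) ^ 2 ∂P)) := by
    have step1 : ∑ J ∈ 𝒥, ∑ j ∈ J, a j
        ≤ ∑ J ∈ 𝒥, Real.sqrt (n : ℝ)
          * Real.sqrt (∫ ω, ∑ j ∈ J, (f (x ω) j - g J j ω) ^ 2 ∂P) := by
      refine Finset.sum_le_sum fun J hJ => ?_
      refine le_trans (Finset.sum_le_sum fun j hj => key2 J hJ j hj) (key4 J hJ)
    have step2 : (𝒥.card : ℝ) * ∑ j : Fin m, a j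
        ≤ (s : ℝ) ^ 2 * ∑ J ∈ 𝒥, Real.sqrt (n : ℝ)
          * Real.sqrt (∫ ω, ∑ j ∈ J, (f (x ω) j - g J j ω) ^ 2 ∂P) := by
      rw [key3]
      exact mul_le_mul_of_nonneg_left step1 (by positivity)
    have step3 : (s : ℝ) ^ 2 * ∑ J ∈ 𝒥, Real.sqrt (n : ℝ)
          * Real.sqrt (∫ ω, ∑ j ∈ J, (f (x ω) j - g J j ω) ^ 2 ∂P)
        = Real.sqrt ((m : ℝ) * (s : ℝ) ^ 2)
          * ∑ J ∈ 𝒥, Real.sqrt (∫ ω, ∑ j ∈ J, (f (x ω) j - g J j ω) ^ 2 ∂P) := by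
      rw [hsqrt, Finset.mul_sum, Finset.mul_sum]
      exact Finset.sum_congr rfl fun J _ => by ring
    rw [step3] at step2
    have hS : ∑ j : Fin m, a j
        ≤ (Real.sqrt ((m : ℝ) * (s : ℝ) ^ 2)
          * ∑ J ∈ 𝒥, Real.sqrt (∫ ω, ∑ j ∈ J, (f (x ω) j - g J j ω) ^ 2 ∂P))
            / (𝒥.card : ℝ) := by
      rw [le_div_iff₀ hc0, mul_comm]
      exact step2
    calc ∑ j : Fin m, a j ≤ _ := hS
      _ = Real.sqrt ((m : ℝ) * (s : ℝ) ^ 2) * ((1 / (𝒥.card : ℝ)) *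
          ∑ J ∈ 𝒥, Real.sqrt (∫ ω, ∑ j ∈ J, (f (x ω) j - g J j ω) ^ 2 ∂P)) := by
        field_simp
  calc (∫ ω, ‖f (x ω) - y ω‖ ^ 2 ∂P) + ∫ ω, ‖x ω - y ω‖ ^ 2 ∂P
      = (∫ ω, ‖f (x ω) - x ω‖ ^ 2 ∂P) + 2 * ∑ j : Fin m, a j := key1
    _ ≤ (∫ ω, ‖f (x ω) - x ω‖ ^ 2 ∂P) +
        2 * Real.sqrt ((m : ℝ) * s ^ 2) * ((1 / (𝒥.card : ℝ)) *
          ∑ J ∈ 𝒥, Real.sqrt (∫ ω, ∑ j ∈ J, (f (x ω) j - g J j ω) ^ 2 ∂P)) := by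
        linarith [main]
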